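/- Let K be an infinite compact Hausdorff space and κ an infinite cardinal. Then every x* in the unit sphere of C(K)* has character ≥ κ in the dual ball B_{C(K)*} with the weak* topology if and only if every Radon probability measure μ on K has character ≥ κ as a point of the space P(K) of Radon probability measures on K with the weak* topology. -/

import Mathlib

open Cardinal Set
open Topology

universe u

/-- The density character of a topological space: the least cardinality of a dense subset. -/
noncomputable def dens (X : Type u) [TopologicalSpace X] : Cardinal.{u} :=
  ⨅ s : {s : Set X // Dense s}, Cardinal.mk ↥(s.1)

/-- A set is linearly dense if its closed linear span is the whole space. -/
def LinearlyDense {X : Type u} [NormedAddCommGroup X] [NormedSpace ℝ X] (S : Set X) : Prop :=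
  (Submodule.span ℝ S).topologicalClosure = ⊤

/-- A set `Y` is overcomplete in `X` if `|Y| = dens X` and every subset of `Y` of full
cardinality is linearly dense in `X`. -/
def Overcomplete {X : Type u} [NormedAddCommGroup X] [NormedSpace ℝ X] (Y : Set X) : Prop :=
  Cardinal.mk ↥Y = dens X ∧ ∀ Z ⊆ Y, Cardinal.mk ↥Z = Cardinal.mk ↥Y → LinearlyDense Z

/-- The character of the point `x` relative to the subspace `A ⊆ T` (with the subspace
topology): the least cardinality of a family `B` of open neighbourhoods of `x` such that
every open neighbourhood of `x` contains some `V ∩ A` with `V ∈ B`. -/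
noncomputable def relChar {T : Type u} [TopologicalSpace T] (A : Set T) (x : T) : Cardinal.{u} :=
  sInf {c | ∃ B : Set (Set T), Cardinal.mk ↥B = c ∧ (∀ V ∈ B, x ∈ V ∧ IsOpen V) ∧
    ∀ U : Set T, IsOpen U → x ∈ U → ∃ V ∈ B, V ∩ A ⊆ U}

/-- The closed unit ball of the dual of `X`, as a subset of the weak* dual. -/
def dualBall (X : Type u) [NormedAddCommGroup X] [NormedSpace ℝ X] : Set (WeakDual ℝ X) :=
  {φ | ‖WeakDual.toStrongDual φ‖ ≤ 1}

section Jordan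

variable {K : Type u} [TopologicalSpace K] [CompactSpace K]

/-- The set of values `φ g` for `0 ≤ g ≤ f`. -/
def posSet (φ : C(K, ℝ) →L[ℝ] ℝ) (f : C(K, ℝ)) : Set ℝ :=
  (fun g => φ g) '' {g | 0 ≤ g ∧ g ≤ f}

/-- The positive part value of `φ` at `f ≥ 0`. -/
noncomputable def pp (φ : C(K, ℝ) →L[ℝ] ℝ) (f : C(K, ℝ)) : ℝ := sSup (posSet φ f)

variable {φ : C(K, ℝ) →L[ℝ] ℝ} {f g : C(K, ℝ)}

lemma posSet_nonempty (hf : 0 ≤ f) : (posSet φ f).Nonempty :=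
  ⟨φ 0, 0, ⟨le_refl 0, hf⟩, rfl⟩

lemma norm_le_of_le (h0 : 0 ≤ g) (hgf : g ≤ f) : ‖g‖ ≤ ‖f‖ := by
  rw [ContinuousMap.norm_le _ (norm_nonneg f)]
  intro x
  have h1 := ContinuousMap.le_def.1 h0 x
  have h2 := ContinuousMap.le_def.1 hgf x
  simp only [ContinuousMap.zero_apply] at h1
  rw [Real.norm_eq_abs, abs_of_nonneg h1]
  exact le_trans h2 (le_trans (le_abs_self _) (f.norm_coe_le_norm x))

lemma posSet_bddAbove : BddAbove (posSet φ f) := by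
  refine ⟨‖φ‖ * ‖f‖, ?_⟩
  rintro r ⟨g, ⟨h0, hgf⟩, rfl⟩
  calc φ g ≤ |φ g| := le_abs_self _
    _ ≤ ‖φ‖ * ‖g‖ := φ.le_opNorm g
    _ ≤ ‖φ‖ * ‖f‖ := by
        exact mul_le_mul_of_nonneg_left (norm_le_of_le h0 hgf) (norm_nonneg φ)

lemma le_pp (h0 : 0 ≤ g) (hgf : g ≤ f) : φ g ≤ pp φ f :=
  le_csSup posSet_bddAbove ⟨g, ⟨h0, hgf⟩, rfl⟩

lemma pp_le {c : ℝ} (hf : 0 ≤ f) (h : ∀ g : C(K, ℝ), 0 ≤ g → g ≤ f → φ g ≤ c) :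
    pp φ f ≤ c := by
  apply csSup_le (posSet_nonempty hf)
  rintro r ⟨g, ⟨h0, hgf⟩, rfl⟩
  exact h g h0 hgf

lemma pp_nonneg (hf : 0 ≤ f) : 0 ≤ pp φ f := by
  have := le_pp (φ := φ) (le_refl 0) hf
  simpa using this

lemma self_le_pp (hf : 0 ≤ f) : φ f ≤ pp φ f := le_pp (le_refl 0 |>.trans hf) le_rfl

lemma pp_le_norm (hf : 0 ≤ f) : pp φ f ≤ ‖φ‖ * ‖f‖ := by
  apply pp_le hf
  intro g h0 hgf
  calc φ g ≤ |φ g| := le_abs_self _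
    _ ≤ ‖φ‖ * ‖g‖ := φ.le_opNorm g
    _ ≤ ‖φ‖ * ‖f‖ := mul_le_mul_of_nonneg_left (norm_le_of_le h0 hgf) (norm_nonneg φ)

lemma pp_zero : pp φ 0 = 0 := by
  apply le_antisymm
  · apply pp_le le_rfl
    intro g h0 hg
    have : g = 0 := le_antisymm hg h0
    simp [this]
  · exact pp_nonneg le_rfl

lemma pp_add (hf : 0 ≤ f) (hg : 0 ≤ g) : pp φ (f + g) = pp φ f + pp φ g := by
  have hfg : 0 ≤ f + g := add_nonneg hf hg
  apply le_antisymm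
  · apply pp_le hfg
    intro h h0 hh
    have h1 : (0 : C(K, ℝ)) ≤ h ⊓ f := le_inf h0 hf
    have h2 : h ⊓ f ≤ f := inf_le_right
    have h3 : (0 : C(K, ℝ)) ≤ h - h ⊓ f := by
      rw [sub_nonneg]; exact inf_le_left
    have h4 : h - h ⊓ f ≤ g := by
      rw [ContinuousMap.le_def]
      intro x
      have hx := ContinuousMap.le_def.1 hh x
      simp only [ContinuousMap.sub_apply, ContinuousMap.inf_apply,
        ContinuousMap.add_apply] at hx ⊢
      rcases le_total (h x) (f x) with hc | hc
      · have hgx := ContinuousMap.le_def.1 hg x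
        simp only [ContinuousMap.zero_apply] at hgx
        rw [min_eq_left hc]; linarith
      · rw [min_eq_right hc]; linarith
    have : φ h = φ (h ⊓ f) + φ (h - h ⊓ f) := by
      rw [map_sub]; ring
    rw [this]
    exact add_le_add (le_pp h1 h2) (le_pp h3 h4)
  · have key : ∀ r₁ ∈ posSet φ f, ∀ r₂ ∈ posSet φ g, r₁ + r₂ ≤ pp φ (f + g) := by
      rintro r₁ ⟨g₁, ⟨h₁0, h₁⟩, rfl⟩ r₂ ⟨g₂, ⟨h₂0, h₂⟩, rfl⟩
      rw [← map_add]
      exact le_pp (add_nonneg h₁0 h₂0) (add_le_add h₁ h₂)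
    have h5 : ∀ r₁ ∈ posSet φ f, r₁ ≤ pp φ (f + g) - pp φ g := by
      intro r₁ h₁
      rw [le_sub_iff_add_le]
      have : pp φ g ≤ pp φ (f + g) - r₁ := by
        apply csSup_le (posSet_nonempty hg)
        intro r₂ h₂
        linarith [key r₁ h₁ r₂ h₂]
      linarith
    have h6 := csSup_le (posSet_nonempty hf) h5
    unfold pp at h6 ⊢
    linarith

lemma pp_smul {c : ℝ} (hc : 0 ≤ c) (hf : 0 ≤ f) : pp φ (c • f) = c * pp φ f := by
  rcases eq_or_lt_of_le hc with rfl | hc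
  · simp [pp_zero]
  have hcf : 0 ≤ c • f := by
    rw [ContinuousMap.le_def]
    intro x
    have := ContinuousMap.le_def.1 hf x
    simp only [ContinuousMap.zero_apply] at this ⊢
    simpa using mul_nonneg hc.le this
  apply le_antisymm
  · apply pp_le hcf
    intro g h0 hg
    have h1 : (0 : C(K, ℝ)) ≤ c⁻¹ • g := by
      rw [ContinuousMap.le_def] at h0 ⊢
      intro x
      have := h0 x
      simp only [ContinuousMap.zero_apply, ContinuousMap.smul_apply, smul_eq_mul] at this ⊢
      positivity
    have h2 : c⁻¹ • g ≤ f := by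
      rw [ContinuousMap.le_def] at hg ⊢
      intro x
      have := hg x
      simp only [ContinuousMap.smul_apply, smul_eq_mul] at this ⊢
      rw [inv_mul_le_iff₀ hc]
      exact this
    have : φ g = c * φ (c⁻¹ • g) := by
      rw [map_smul, smul_eq_mul, ← mul_assoc, mul_inv_cancel₀ hc.ne', one_mul]
    rw [this]
    exact mul_le_mul_of_nonneg_left (le_pp h1 h2) hc.le
  · rw [mul_comm, ← le_div_iff₀ hc]
    apply pp_le hf
    intro g h0 hg
    rw [le_div_iff₀ hc, mul_comm]
    have : c * φ g = φ (c • g) := by rw [map_smul, smul_eq_mul]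
    rw [this]
    apply le_pp
    · rw [ContinuousMap.le_def] at h0 ⊢
      intro x
      have := h0 x
      simp only [ContinuousMap.zero_apply, ContinuousMap.smul_apply, smul_eq_mul] at this ⊢
      positivity
    · rw [ContinuousMap.le_def] at hg ⊢
      intro x
      have := hg x
      simp only [ContinuousMap.smul_apply, smul_eq_mul] at this ⊢
      exact mul_le_mul_of_nonneg_left this hc.le

end Jordan

section Jordan2

set_option linter.unusedSectionVars false

variable {K : Type u} [TopologicalSpace K] [CompactSpace K]
variable {φ : C(K, ℝ) →L[ℝ] ℝ} {f g u v : C(K, ℝ)}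

lemma csmul_nonneg {c : ℝ} (hc : 0 ≤ c) (hf : 0 ≤ f) : 0 ≤ c • f := by
  rw [ContinuousMap.le_def] at hf ⊢
  intro x
  have := hf x
  simp only [ContinuousMap.zero_apply, ContinuousMap.smul_apply, smul_eq_mul] at this ⊢
  positivity

lemma sub_posPart (f : C(K, ℝ)) : f = (f ⊔ 0) - ((-f) ⊔ 0) := by
  ext x
  simp only [ContinuousMap.sub_apply, ContinuousMap.sup_apply, ContinuousMap.neg_apply,
    ContinuousMap.zero_apply]
  rcases le_total (f x) 0 with h | h
  · rw [sup_eq_right.2 h, sup_eq_left.2 (by linarith : (0:ℝ) ≤ -f x)]; ring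
  · rw [sup_eq_left.2 h, sup_eq_right.2 (by linarith : -f x ≤ 0)]; ring

lemma posPart_nonneg' : (0 : C(K, ℝ)) ≤ f ⊔ 0 := le_sup_right

noncomputable def jordanFun (φ : C(K, ℝ) →L[ℝ] ℝ) (f : C(K, ℝ)) : ℝ :=
  pp φ (f ⊔ 0) - pp φ ((-f) ⊔ 0)

lemma jordanFun_eq (hu : 0 ≤ u) (hv : 0 ≤ v) (h : f = u - v) :
    jordanFun φ f = pp φ u - pp φ v := by
  have key : (f ⊔ 0) + v = u + ((-f) ⊔ 0) := by
    have h1 := sub_posPart f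
    rw [h1] at h
    rw [sub_eq_sub_iff_add_eq_add] at h
    exact h
  have h2 : pp φ ((f ⊔ 0) + v) = pp φ (u + ((-f) ⊔ 0)) := by rw [key]
  rw [pp_add posPart_nonneg' hv, pp_add hu posPart_nonneg'] at h2
  unfold jordanFun
  linarith

lemma jordanFun_add (f g : C(K, ℝ)) :
    jordanFun φ (f + g) = jordanFun φ f + jordanFun φ g := by
  have e : (f ⊔ 0 + g ⊔ 0) - ((-f) ⊔ 0 + (-g) ⊔ 0)
      = (f ⊔ 0 - (-f) ⊔ 0) + (g ⊔ 0 - (-g) ⊔ 0) := by abel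
  have h : f + g = (f ⊔ 0 + g ⊔ 0) - ((-f) ⊔ 0 + (-g) ⊔ 0) := by
    rw [e, ← sub_posPart f, ← sub_posPart g]
  rw [jordanFun_eq (add_nonneg posPart_nonneg' posPart_nonneg')
    (add_nonneg posPart_nonneg' posPart_nonneg') h,
    pp_add posPart_nonneg' posPart_nonneg', pp_add posPart_nonneg' posPart_nonneg']
  unfold jordanFun
  ring

lemma jordanFun_neg (f : C(K, ℝ)) : jordanFun φ (-f) = - jordanFun φ f := by
  have h : -f = ((-f) ⊔ 0) - (f ⊔ 0) := by
    have := sub_posPart (-f)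
    rwa [neg_neg] at this
  rw [jordanFun_eq posPart_nonneg' posPart_nonneg' h]
  unfold jordanFun
  ring

lemma jordanFun_smul (c : ℝ) (f : C(K, ℝ)) :
    jordanFun φ (c • f) = c * jordanFun φ f := by
  have pos : ∀ c : ℝ, 0 ≤ c → ∀ f : C(K, ℝ), jordanFun φ (c • f) = c * jordanFun φ f := by
    intro c hc f
    have h : c • f = c • (f ⊔ 0) - c • ((-f) ⊔ 0) := by
      rw [← smul_sub, ← sub_posPart f]
    rw [jordanFun_eq (csmul_nonneg hc posPart_nonneg') (csmul_nonneg hc posPart_nonneg') h,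
      pp_smul hc posPart_nonneg', pp_smul hc posPart_nonneg']
    unfold jordanFun
    ring
  rcases le_or_gt 0 c with hc | hc
  · exact pos c hc f
  · have h1 : c • f = -((-c) • f) := by rw [neg_smul, neg_neg]
    rw [h1, jordanFun_neg, pos (-c) (by linarith) f]
    ring

lemma norm_posPart_le (f : C(K, ℝ)) : ‖f ⊔ 0‖ ≤ ‖f‖ := by
  rw [ContinuousMap.norm_le _ (norm_nonneg f)]
  intro x
  simp only [ContinuousMap.sup_apply, ContinuousMap.zero_apply]
  rw [Real.norm_eq_abs, abs_of_nonneg (le_max_right _ _)]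
  rcases le_total (f x) 0 with h | h
  · rw [max_eq_right h]; exact norm_nonneg f
  · rw [max_eq_left h]
    exact le_trans (le_abs_self _) (f.norm_coe_le_norm x)

lemma jordanFun_bound (f : C(K, ℝ)) : ‖jordanFun φ f‖ ≤ ‖φ‖ * ‖f‖ := by
  have h1 : 0 ≤ pp φ (f ⊔ 0) := pp_nonneg posPart_nonneg'
  have h2 : 0 ≤ pp φ ((-f) ⊔ 0) := pp_nonneg posPart_nonneg'
  have h3 : pp φ (f ⊔ 0) ≤ ‖φ‖ * ‖f‖ := by
    refine le_trans (pp_le_norm posPart_nonneg') ?_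
    exact mul_le_mul_of_nonneg_left (norm_posPart_le f) (norm_nonneg φ)
  have h4 : pp φ ((-f) ⊔ 0) ≤ ‖φ‖ * ‖f‖ := by
    refine le_trans (pp_le_norm posPart_nonneg') ?_
    refine mul_le_mul_of_nonneg_left ?_ (norm_nonneg φ)
    rw [← norm_neg f]
    exact norm_posPart_le (-f)
  rw [Real.norm_eq_abs, abs_le]
  unfold jordanFun
  constructor <;> linarith

/-- The positive part of a functional, as a continuous linear map. -/
noncomputable def jordanCLM (φ : C(K, ℝ) →L[ℝ] ℝ) : C(K, ℝ) →L[ℝ] ℝ :=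
  LinearMap.mkContinuous
    { toFun := jordanFun φ
      map_add' := jordanFun_add
      map_smul' := jordanFun_smul } ‖φ‖ jordanFun_bound

lemma jordanCLM_apply (f : C(K, ℝ)) : jordanCLM φ f = jordanFun φ f := rfl

lemma jordanCLM_of_nonneg (hf : 0 ≤ f) : jordanCLM φ f = pp φ f := by
  rw [jordanCLM_apply]
  unfold jordanFun
  rw [sup_eq_left.2 hf, sup_eq_right.2 (neg_nonpos.2 hf), pp_zero, sub_zero]

lemma jordanCLM_pos (hf : 0 ≤ f) : 0 ≤ jordanCLM φ f := by
  rw [jordanCLM_of_nonneg hf]; exact pp_nonneg hf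

lemma self_le_jordanCLM (hf : 0 ≤ f) : φ f ≤ jordanCLM φ f := by
  rw [jordanCLM_of_nonneg hf]; exact self_le_pp hf

end Jordan2

section PosFunc

set_option linter.unusedSectionVars false

variable {K : Type u} [TopologicalSpace K] [CompactSpace K]

lemma pos_abs_le {ψ : C(K, ℝ) →L[ℝ] ℝ} (hψ : ∀ f : C(K, ℝ), 0 ≤ f → 0 ≤ ψ f)
    (f : C(K, ℝ)) : |ψ f| ≤ ψ 1 * ‖f‖ := by
  have h1 : (0 : C(K, ℝ)) ≤ ‖f‖ • (1 : C(K, ℝ)) - f := by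
    rw [ContinuousMap.le_def]
    intro x
    simp only [ContinuousMap.zero_apply, ContinuousMap.sub_apply, ContinuousMap.smul_apply,
      ContinuousMap.one_apply, smul_eq_mul, mul_one]
    have := le_trans (le_abs_self _) (f.norm_coe_le_norm x)
    linarith
  have h2 : (0 : C(K, ℝ)) ≤ ‖f‖ • (1 : C(K, ℝ)) + f := by
    rw [ContinuousMap.le_def]
    intro x
    simp only [ContinuousMap.zero_apply, ContinuousMap.add_apply, ContinuousMap.smul_apply,
      ContinuousMap.one_apply, smul_eq_mul, mul_one]
    have h := f.norm_coe_le_norm x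
    rw [Real.norm_eq_abs, abs_le] at h
    linarith [h.1]
  have e1 := hψ _ h1
  have e2 := hψ _ h2
  rw [map_sub, map_smul, smul_eq_mul] at e1
  rw [map_add, map_smul, smul_eq_mul] at e2
  rw [abs_le]
  constructor <;> nlinarith

lemma pos_opNorm_le {ψ : C(K, ℝ) →L[ℝ] ℝ} (hψ : ∀ f : C(K, ℝ), 0 ≤ f → 0 ≤ ψ f) :
    ‖ψ‖ ≤ ψ 1 := by
  apply ContinuousLinearMap.opNorm_le_bound ψ (hψ 1 zero_le_one)
  intro f
  rw [Real.norm_eq_abs]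
  exact pos_abs_le hψ f

end PosFunc

section RelCharLemmas

/-- The witness set of `relChar`. -/
def witSet {T : Type u} [TopologicalSpace T] (A : Set T) (x : T) : Set Cardinal.{u} :=
  {c | ∃ B : Set (Set T), Cardinal.mk ↥B = c ∧ (∀ V ∈ B, x ∈ V ∧ IsOpen V) ∧
    ∀ U : Set T, IsOpen U → x ∈ U → ∃ V ∈ B, V ∩ A ⊆ U}

lemma relChar_eq_sInf {T : Type u} [TopologicalSpace T] (A : Set T) (x : T) :
    relChar A x = sInf (witSet A x) := rfl

lemma witSet_nonempty {T : Type u} [TopologicalSpace T] (A : Set T) (x : T) :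
    (witSet A x).Nonempty :=
  ⟨_, {V | x ∈ V ∧ IsOpen V}, rfl, fun _ hV => hV,
    fun U hU hx => ⟨U, ⟨hx, hU⟩, Set.inter_subset_left⟩⟩

/-- Transport of relative character along a continuous map embedding a compact set. -/
lemma relChar_le_embed {T : Type u} [TopologicalSpace T] [T2Space T] {A P : Set T} {x y : T}
    (g : T → T) (hg : Continuous g) (hinj : ∀ z, g z = g y → z = y) (hP : IsCompact P)
    (hgP : ∀ ψ ∈ P, g ψ ∈ A) (hgy : g y = x) :
    relChar P y ≤ relChar A x := by
  rw [relChar_eq_sInf, relChar_eq_sInf]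
  apply le_csInf (witSet_nonempty A x)
  rintro c ⟨B, hBc, hBmem, hBcov⟩
  refine le_trans (csInf_le' ?_) (hBc ▸ Cardinal.mk_image_le (f := fun V => g ⁻¹' V) (s := B))
  refine ⟨(fun V => g ⁻¹' V) '' B, rfl, ?_, ?_⟩
  · rintro V' ⟨V, hV, rfl⟩
    exact ⟨by simp only [Set.mem_preimage, hgy]; exact (hBmem V hV).1,
      (hBmem V hV).2.preimage hg⟩
  · intro U hU hyU
    have hK : IsCompact (g '' (P \ U)) := (hP.diff hU).image hg
    have hKc : IsClosed (g '' (P \ U)) := hK.isClosed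
    have hxK : x ∉ g '' (P \ U) := by
      rintro ⟨ψ, ⟨hψP, hψU⟩, hgψ⟩
      exact hψU (hinj ψ (hgψ.trans hgy.symm) ▸ hyU)
    obtain ⟨V, hVB, hVsub⟩ := hBcov _ hKc.isOpen_compl hxK
    refine ⟨g ⁻¹' V, ⟨V, hVB, rfl⟩, ?_⟩
    rintro ψ ⟨hψV, hψP⟩
    by_contra hψU
    exact hVsub ⟨hψV, hgP ψ hψP⟩ ⟨ψ, ⟨hψP, hψU⟩, rfl⟩

end RelCharLemmas

section WeakP

set_option linter.unusedSectionVars false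

variable {K : Type u} [TopologicalSpace K] [CompactSpace K] [T2Space K]

/-- The set of positive unital functionals, in the weak* dual. -/
def Pset (K : Type u) [TopologicalSpace K] : Set (WeakDual ℝ C(K, ℝ)) :=
  {ψ | (∀ f : C(K, ℝ), 0 ≤ f → 0 ≤ ψ f) ∧ ψ 1 = 1}

lemma dualBall_eq : dualBall (C(K, ℝ))
    = WeakDual.toStrongDual ⁻¹' Metric.closedBall 0 1 := by
  ext ψ
  simp [dualBall, Metric.mem_closedBall, dist_zero_right]

lemma ballCompact : IsCompact (dualBall (C(K, ℝ))) := by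
  rw [dualBall_eq]
  exact WeakDual.isCompact_closedBall (𝕜 := ℝ) 0 1

lemma Pclosed : IsClosed (Pset K) := by
  have : Pset K = (⋂ f : {f : C(K, ℝ) // 0 ≤ f},
      {ψ : WeakDual ℝ C(K, ℝ) | 0 ≤ ψ f.1}) ∩ {ψ : WeakDual ℝ C(K, ℝ) | ψ 1 = 1} := by
    ext ψ
    simp only [Pset, Set.mem_setOf_eq, Set.mem_inter_iff, Set.mem_iInter, Subtype.forall]
  rw [this]
  exact (isClosed_iInter fun f : {f : C(K, ℝ) // 0 ≤ f} =>
    isClosed_le continuous_const (WeakDual.eval_continuous f.1)).inter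
    (isClosed_eq (WeakDual.eval_continuous 1) continuous_const)

lemma Psub : Pset K ⊆ dualBall (C(K, ℝ)) := by
  rintro ψ ⟨hpos, hone⟩
  have h : ‖WeakDual.toStrongDual ψ‖ ≤ (WeakDual.toStrongDual ψ) 1 :=
    pos_opNorm_le (ψ := WeakDual.toStrongDual ψ) hpos
  simpa [dualBall, hone] using h

lemma Pcompact : IsCompact (Pset K) :=
  ballCompact.of_isClosed_subset Pclosed Psub

lemma mem_P_of_ball [Nonempty K] {ψ : WeakDual ℝ C(K, ℝ)}
    (hb : ψ ∈ dualBall (C(K, ℝ))) (h1 : 1 ≤ ψ 1) : ψ ∈ Pset K := by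
  have hb' : ‖WeakDual.toStrongDual ψ‖ ≤ 1 := hb
  have habs : ∀ f : C(K, ℝ), |ψ f| ≤ ‖f‖ := by
    intro f
    have := (WeakDual.toStrongDual ψ).le_opNorm f
    rw [Real.norm_eq_abs] at this
    calc |ψ f| ≤ ‖WeakDual.toStrongDual ψ‖ * ‖f‖ := this
      _ ≤ 1 * ‖f‖ := mul_le_mul_of_nonneg_right hb' (norm_nonneg f)
      _ = ‖f‖ := one_mul _
  have hone : ψ 1 = 1 := by
    have := habs 1
    rw [norm_one] at this
    have := (abs_le.1 this).2
    linarith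
  refine ⟨?_, hone⟩
  intro f hf
  rcases eq_or_ne f 0 with rfl | hne
  · simp
  have hfpos : 0 < ‖f‖ := norm_pos_iff.2 hne
  set h : C(K, ℝ) := 1 - ‖f‖⁻¹ • f with hh
  have hnorm : ‖h‖ ≤ 1 := by
    rw [ContinuousMap.norm_le _ zero_le_one]
    intro x
    have hx0 := ContinuousMap.le_def.1 hf x
    simp only [ContinuousMap.zero_apply] at hx0
    have hx1 : f x ≤ ‖f‖ := le_trans (le_abs_self _) (f.norm_coe_le_norm x)
    simp only [hh, ContinuousMap.sub_apply, ContinuousMap.one_apply, ContinuousMap.smul_apply,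
      smul_eq_mul]
    rw [Real.norm_eq_abs, abs_le]
    constructor
    · have : ‖f‖⁻¹ * f x ≤ 1 := by
        rw [inv_mul_le_iff₀ hfpos]; linarith
      linarith
    · have : 0 ≤ ‖f‖⁻¹ * f x := by positivity
      linarith
  have hψh : ψ h ≤ 1 := by
    have := habs h
    have := (abs_le.1 this).2
    linarith
  have : ψ h = 1 - ‖f‖⁻¹ * ψ f := by
    simp only [hh, map_sub, map_smul, smul_eq_mul, hone]
  rw [this] at hψh
  have h3 : 0 ≤ ‖f‖⁻¹ * ψ f := by linarith
  exact le_of_not_gt fun hlt =>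
    absurd h3 (not_le.2 (mul_neg_of_pos_of_neg (inv_pos.2 hfpos) hlt))

set_option maxHeartbeats 1000000 in
lemma exists_near [Infinite K] {φ : C(K, ℝ) →L[ℝ] ℝ}
    (hpos : ∀ f : C(K, ℝ), 0 ≤ f → 0 ≤ φ f) (hone : φ 1 = 1)
    {N : Set (WeakDual ℝ C(K, ℝ))} (hN : IsOpen N)
    (hφN : StrongDual.toWeakDual φ ∈ N) :
    ∃ ψ : WeakDual ℝ C(K, ℝ), ψ ∈ N ∧ ψ ∈ Pset K ∧ ψ ≠ StrongDual.toWeakDual φ := by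
  -- find a point and a function witnessing that φ is not a Dirac measure
  obtain ⟨x0, f0, hf0⟩ : ∃ (x0 : K) (f0 : C(K, ℝ)), f0 x0 ≠ φ f0 := by
    by_contra h
    push_neg at h
    obtain ⟨x, y, hxy⟩ := exists_pair_ne K
    obtain ⟨f, hfx, hfy, -⟩ := exists_continuous_zero_one_of_isClosed
      (isClosed_singleton (x := x)) (isClosed_singleton (x := y))
      (Set.disjoint_singleton.2 hxy)
    have h1 : f x = 0 := hfx rfl
    have h2 : f y = 1 := hfy rfl
    have := (h x f).trans (h y f).symm
    rw [h1, h2] at this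
    norm_num at this
  set δ : C(K, ℝ) →L[ℝ] ℝ := ContinuousMap.evalCLM ℝ x0 with hδ
  have hδ_apply : ∀ f : C(K, ℝ), δ f = f x0 := fun f => rfl
  set c : ℝ → WeakDual ℝ C(K, ℝ) :=
    fun t => StrongDual.toWeakDual (φ + t • (δ - φ)) with hc
  have hc_apply : ∀ t (f : C(K, ℝ)), c t f = φ f + t * (f x0 - φ f) := by
    intro t f
    show (φ + t • (δ - φ)) f = _
    simp [ContinuousLinearMap.add_apply, ContinuousLinearMap.smul_apply,
      ContinuousLinearMap.sub_apply, hδ_apply, smul_eq_mul]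
  have hc_cont : Continuous c := by
    apply WeakDual.continuous_of_continuous_eval
    intro f
    have : (fun t => c t f) = fun t => φ f + t * (f x0 - φ f) := funext fun t => hc_apply t f
    rw [this]
    exact continuous_const.add (continuous_id.mul continuous_const)
  have hc0 : c 0 = StrongDual.toWeakDual φ := by
    show StrongDual.toWeakDual (φ + (0:ℝ) • (δ - φ)) = StrongDual.toWeakDual φ
    rw [zero_smul, add_zero]
  have hopen : IsOpen (c ⁻¹' N) := hN.preimage hc_cont
  have h0mem : (0 : ℝ) ∈ c ⁻¹' N := by rw [Set.mem_preimage, hc0]; exact hφN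
  obtain ⟨ε, hε, hball⟩ := Metric.isOpen_iff.1 hopen 0 h0mem
  set t := min (ε / 2) (1 / 2) with ht
  have ht0 : 0 < t := lt_min (by linarith) (by norm_num)
  have ht1 : t ≤ 1 / 2 := min_le_right _ _
  have htε : t < ε := lt_of_le_of_lt (min_le_left _ _) (by linarith)
  have htmem : t ∈ c ⁻¹' N := by
    apply hball
    rw [Metric.mem_ball, dist_zero_right, Real.norm_eq_abs, abs_of_pos ht0]
    exact htε
  refine ⟨c t, htmem, ⟨?_, ?_⟩, ?_⟩
  · intro f hf
    rw [hc_apply]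
    have h1 := hpos f hf
    have h2 : 0 ≤ f x0 := by
      have := ContinuousMap.le_def.1 hf x0
      simpa using this
    nlinarith [mul_nonneg (by linarith : (0:ℝ) ≤ 1 - t) h1, mul_nonneg ht0.le h2]
  · rw [hc_apply]
    simp only [ContinuousMap.one_apply, hone]
    ring
  · intro heq
    have := congrArg (fun ψ : WeakDual ℝ C(K, ℝ) => ψ f0) heq
    simp only [hc_apply] at this
    have hφ : (StrongDual.toWeakDual φ) f0 = φ f0 := rfl
    rw [hφ] at this
    have : t * (f0 x0 - φ f0) = 0 := by linarith
    rcases mul_eq_zero.1 this with h | h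
    · exact ht0.ne' h
    · exact hf0 (by linarith)

end WeakP


set_option maxHeartbeats 1000000 in
/-- for `K` infinite compact Hausdorff and `κ` infinite: every norm-one
functional on `C(K)` has character `≥ κ` in the weak* dual ball iff every Radon
probability measure (realized via Riesz as a positive unital functional) has character
`≥ κ` in the space `P(K)` of such functionals with the weak* topology. -/
theorem stmt18 {K : Type u} [TopologicalSpace K] [CompactSpace K] [T2Space K] [Infinite K]
    {κ : Cardinal.{u}} (hκ : Cardinal.aleph0 ≤ κ) :
    (∀ φ : C(K, ℝ) →L[ℝ] ℝ, ‖φ‖ = 1 →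
       κ ≤ relChar (dualBall (C(K, ℝ))) (StrongDual.toWeakDual φ)) ↔
    (∀ φ : C(K, ℝ) →L[ℝ] ℝ, (∀ f : C(K, ℝ), 0 ≤ f → 0 ≤ φ f) → φ 1 = 1 →
       κ ≤ relChar
         {ψ : WeakDual ℝ C(K, ℝ) | (∀ f : C(K, ℝ), 0 ≤ f → 0 ≤ ψ f) ∧ ψ 1 = 1}
         (StrongDual.toWeakDual φ)) := by
  have hKne : Nonempty K := inferInstance
  have hPset : {ψ : WeakDual ℝ C(K, ℝ) | (∀ f : C(K, ℝ), 0 ≤ f → 0 ≤ ψ f) ∧ ψ 1 = 1}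
      = Pset K := rfl
  constructor
  · -- forward direction
    intro hL φ hpos hone
    rw [hPset]
    have hφnorm : ‖φ‖ = 1 := by
      apply le_antisymm
      · have := pos_opNorm_le hpos
        rwa [hone] at this
      · have := φ.le_opNorm 1
        rw [norm_one, mul_one, Real.norm_eq_abs, hone] at this
        simpa using this
    have hκball := hL φ hφnorm
    set φw := StrongDual.toWeakDual φ with hφw
    rw [relChar_eq_sInf]
    apply le_csInf (witSet_nonempty _ _)
    rintro c ⟨B, hBc, hBmem, hBcov⟩
    by_cases hfin : c < Cardinal.aleph0
    · -- finite case: impossible since φ is not isolated in P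
      exfalso
      have hBfin : B.Finite := by
        rw [← Cardinal.lt_aleph0_iff_set_finite, hBc]; exact hfin
      have hNopen : IsOpen (⋂₀ B) := hBfin.isOpen_sInter (fun V hV => (hBmem V hV).2)
      have hφN : φw ∈ ⋂₀ B := fun V hV => (hBmem V hV).1
      obtain ⟨ψ, hψN, hψP, hψne⟩ := exists_near hpos hone hNopen hφN
      obtain ⟨U1, U2, hU1, hU2, hψU1, hφU2, hdisj⟩ := t2_separation hψne
      obtain ⟨V, hVB, hVsub⟩ := hBcov U2 hU2 hφU2
      have hψU2 : ψ ∈ U2 := hVsub ⟨hψN V hVB, hψP⟩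
      exact Set.disjoint_left.1 hdisj hψU1 hψU2
    · push_neg at hfin
      -- infinite case: build a base of the dual ball at φ of cardinality ≤ c
      set G : ℕ → Set (WeakDual ℝ C(K, ℝ)) :=
        fun n => {ψ | 1 - 1/((n:ℝ)+1) < ψ 1} with hG
      set S : Set (Set (WeakDual ℝ C(K, ℝ))) := B ∪ Set.range G with hS
      have hSmem : ∀ V ∈ S, φw ∈ V ∧ IsOpen V := by
        rintro V (hV | ⟨n, rfl⟩)
        · exact hBmem V hV
        · constructor
          · show 1 - 1/((n:ℝ)+1) < φw 1
            have h1 : φw 1 = 1 := hone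
            rw [h1]
            have : 0 < 1/((n:ℝ)+1) := by positivity
            linarith
          · exact isOpen_lt continuous_const (WeakDual.eval_continuous 1)
      have hBS : B ⊆ S := Set.subset_union_left
      have hSinf : Cardinal.aleph0 ≤ Cardinal.mk ↥S := by
        refine le_trans ?_ (Cardinal.mk_le_mk_of_subset hBS)
        rw [hBc]; exact hfin
      have hScard : Cardinal.mk ↥S ≤ c := by
        refine le_trans (Cardinal.mk_union_le _ _) ?_
        have h1 : Cardinal.mk ↥(Set.range G) ≤ Cardinal.aleph0 :=
          Cardinal.le_aleph0_iff_set_countable.2 (Set.countable_range G)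
        calc Cardinal.mk ↥B + Cardinal.mk ↥(Set.range G)
            ≤ c + Cardinal.aleph0 := by rw [hBc]; exact add_le_add_right h1 c
          _ ≤ c + c := add_le_add_right hfin c
          _ = c := Cardinal.add_eq_self hfin
      -- shrink the sets using regularity
      have hmem𝓝 : ∀ i : ↥S, i.1 ∈ 𝓝 φw :=
        fun i => ((hSmem i.1 i.2).2).mem_nhds (hSmem i.1 i.2).1
      choose Vc hVc𝓝 hVccl hVcsub using fun i : ↥S => exists_mem_nhds_isClosed_subset (hmem𝓝 i)
      set w : ↥S → Set (WeakDual ℝ C(K, ℝ)) := fun i => interior (Vc i) with hw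
      have hwopen : ∀ i, IsOpen (w i) := fun i => isOpen_interior
      have hwmem : ∀ i, φw ∈ w i := fun i => mem_interior_iff_mem_nhds.2 (hVc𝓝 i)
      have hwcl : ∀ i, closure (w i) ⊆ i.1 := fun i => by
        refine le_trans (closure_mono interior_subset) ?_
        rw [(hVccl i).closure_eq]
        exact hVcsub i
      have hpseudo : ∀ ψ ∈ dualBall (C(K, ℝ)), (∀ i : ↥S, ψ ∈ closure (w i)) → ψ = φw := by
        intro ψ hψball hψ
        have hψS : ∀ V (hV : V ∈ S), ψ ∈ V := fun V hV => hwcl ⟨V, hV⟩ (hψ ⟨V, hV⟩)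
        have hψ1 : 1 ≤ ψ 1 := by
          by_contra hlt
          push_neg at hlt
          obtain ⟨n, hn⟩ := exists_nat_one_div_lt (by linarith : (0:ℝ) < 1 - ψ 1)
          have h2 : ψ ∈ G n := hψS (G n) (Set.mem_union_right _ ⟨n, rfl⟩)
          have h3 : 1 - 1/((n:ℝ)+1) < ψ 1 := h2
          linarith
        have hψP : ψ ∈ Pset K := mem_P_of_ball hψball hψ1
        by_contra hne
        obtain ⟨U1, U2, hU1, hU2, hψU1, hφU2, hdisj⟩ := t2_separation hne
        obtain ⟨V, hVB, hVsub⟩ := hBcov U2 hU2 hφU2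
        exact Set.disjoint_left.1 hdisj hψU1 (hVsub ⟨hψS V (hBS hVB), hψP⟩)
      -- the finite intersections of the w i form a base at φw in the ball
      haveI : Infinite ↥S := Cardinal.aleph0_le_mk_iff.1 hSinf
      have key : relChar (dualBall (C(K, ℝ))) φw ≤ c := by
        rw [relChar_eq_sInf]
        have hwit : Cardinal.mk ↥(Set.range (fun F : Finset ↥S => ⋂ i ∈ F, w i))
            ∈ witSet (dualBall (C(K, ℝ))) φw := by
          refine ⟨Set.range (fun F : Finset ↥S => ⋂ i ∈ F, w i), rfl, ?_, ?_⟩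
          · rintro V' ⟨F, rfl⟩
            exact ⟨Set.mem_iInter₂.2 fun i _ => hwmem i,
              isOpen_biInter_finset fun i _ => hwopen i⟩
          · intro U hU hφU
            have hC : IsCompact (dualBall (C(K, ℝ)) \ U) := ballCompact.diff hU
            have hcover : dualBall (C(K, ℝ)) \ U ⊆ ⋃ i : ↥S, (closure (w i))ᶜ := by
              rintro ψ ⟨hψball, hψU⟩
              rw [Set.mem_iUnion]
              by_contra hno
              push_neg at hno
              have : ψ = φw := hpseudo ψ hψball (fun i => by
                have := hno i
                rwa [Set.notMem_compl_iff] at this)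
              exact hψU (this ▸ hφU)
            obtain ⟨F, hF⟩ := hC.elim_finite_subcover (fun i : ↥S => (closure (w i))ᶜ)
              (fun i => isClosed_closure.isOpen_compl) hcover
            refine ⟨⋂ i ∈ F, w i, ⟨F, rfl⟩, ?_⟩
            rintro ψ ⟨hψV, hψball⟩
            by_contra hψU
            obtain ⟨i, hiF, hi⟩ := Set.mem_iUnion₂.1 (hF ⟨hψball, hψU⟩)
            exact hi (subset_closure (Set.mem_iInter₂.1 hψV i hiF))
        refine le_trans (csInf_le' hwit) ?_
        refine le_trans Cardinal.mk_range_le ?_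
        rw [Cardinal.mk_finset_of_infinite]
        exact hScard
      exact le_trans hκball key
  · -- backward direction
    intro hR φ hφnorm
    -- Jordan decomposition
    set φp := jordanCLM φ with hφp
    set φm := φp - φ with hφm
    have hφp_pos : ∀ f : C(K, ℝ), 0 ≤ f → 0 ≤ φp f := fun f hf => jordanCLM_pos hf
    have hφm_pos : ∀ f : C(K, ℝ), 0 ≤ f → 0 ≤ φm f := by
      intro f hf
      have := self_le_jordanCLM (φ := φ) hf
      simp only [hφm, ContinuousLinearMap.sub_apply, sub_nonneg]
      exact this
    set a := φp 1 with haa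
    set b := φm 1 with hbb
    have ha : 0 ≤ a := hφp_pos 1 zero_le_one
    have hb : 0 ≤ b := hφm_pos 1 zero_le_one
    have hab : a + b ≤ 1 := by
      have ha' : a = pp φ 1 := jordanCLM_of_nonneg zero_le_one
      have hb' : b = pp φ 1 - φ 1 := by
        rw [hbb, hφm, ContinuousLinearMap.sub_apply, ← haa, ha']
      have h2 : pp φ 1 ≤ (1 + φ 1) / 2 := by
        apply pp_le zero_le_one
        intro g h0 hg1
        have hnorm2 : ‖(2:ℝ) • g - 1‖ ≤ 1 := by
          rw [ContinuousMap.norm_le _ zero_le_one]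
          intro x
          have h1 := ContinuousMap.le_def.1 h0 x
          have h2 := ContinuousMap.le_def.1 hg1 x
          simp only [ContinuousMap.zero_apply, ContinuousMap.one_apply] at h1 h2
          simp only [ContinuousMap.sub_apply, ContinuousMap.smul_apply,
            ContinuousMap.one_apply, smul_eq_mul]
          rw [Real.norm_eq_abs, abs_le]
          constructor <;> linarith
        have := ((2:ℝ) • g - 1 : C(K, ℝ)) |> φ.le_opNorm
        rw [hφnorm, one_mul, Real.norm_eq_abs] at this
        have h3 : |φ ((2:ℝ) • g - 1)| ≤ 1 := le_trans this hnorm2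
        have h4 : φ ((2:ℝ) • g - 1) = 2 * φ g - φ 1 := by
          rw [map_sub, map_smul, smul_eq_mul]
        rw [h4] at h3
        have := (abs_le.1 h3).2
        linarith
      linarith
    -- get μ positive unital, s ≠ 0, cst with φ = s • μ + cst and |s| + ‖cst‖ ≤ 1
    obtain ⟨μ, hμpos, hμ1, s, hs0, cst, habs, heq⟩ :
        ∃ (μ : C(K, ℝ) →L[ℝ] ℝ), (∀ f : C(K, ℝ), 0 ≤ f → 0 ≤ μ f) ∧ μ 1 = 1 ∧
          ∃ (s : ℝ), s ≠ 0 ∧ ∃ (cst : C(K, ℝ) →L[ℝ] ℝ),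
            |s| + ‖cst‖ ≤ 1 ∧ s • μ + cst = φ := by
      rcases eq_or_lt_of_le ha with haz | hapos
      · -- a = 0, so φp = 0 and b > 0
        have hφp0 : φp = 0 := by
          ext f
          have h1 := pos_abs_le hφp_pos f
          rw [← haa, ← haz, zero_mul] at h1
          have := abs_nonneg (φp f)
          have : |φp f| = 0 := le_antisymm h1 this
          simpa [abs_eq_zero] using this
        have hbpos : 0 < b := by
          rcases eq_or_lt_of_le hb with hbz | h
          · exfalso
            have hφm0 : φm = 0 := by
              ext f
              have h1 := pos_abs_le hφm_pos f
              rw [← hbb, ← hbz, zero_mul] at h1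
              have := abs_nonneg (φm f)
              have : |φm f| = 0 := le_antisymm h1 this
              simpa [abs_eq_zero] using this
            have hφ0 : φ = 0 := by
              have h2 : φ = φp - φm := by rw [hφm]; abel
              rw [h2, hφp0, hφm0, sub_zero]
            have hz0 : ‖(0 : C(K, ℝ) →L[ℝ] ℝ)‖ = 0 := ContinuousLinearMap.opNorm_zero
            have hcontra : (1:ℝ) = 0 := by rw [← hφnorm, hφ0, hz0]
            norm_num at hcontra
          · exact h
        refine ⟨b⁻¹ • φm, ?_, ?_, -b, ?_, φp, ?_, ?_⟩
        · intro f hf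
          have := hφm_pos f hf
          have hbinv : 0 ≤ b⁻¹ := inv_nonneg.2 hb
          simp only [ContinuousLinearMap.smul_apply, smul_eq_mul]
          positivity
        · simp only [ContinuousLinearMap.smul_apply, smul_eq_mul, ← hbb]
          exact inv_mul_cancel₀ hbpos.ne'
        · simpa using hbpos.ne'
        · have h1 : ‖φp‖ ≤ a := pos_opNorm_le hφp_pos
          simp only [abs_of_neg (by linarith : -b < 0), neg_neg]
          linarith
        · ext f
          simp only [ContinuousLinearMap.add_apply, ContinuousLinearMap.smul_apply,
            ContinuousLinearMap.sub_apply, smul_eq_mul, hφm]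
          field_simp
          ring
      · -- a > 0
        refine ⟨a⁻¹ • φp, ?_, ?_, a, hapos.ne', -φm, ?_, ?_⟩
        · intro f hf
          have := hφp_pos f hf
          have hainv : 0 ≤ a⁻¹ := inv_nonneg.2 ha
          simp only [ContinuousLinearMap.smul_apply, smul_eq_mul]
          positivity
        · simp only [ContinuousLinearMap.smul_apply, smul_eq_mul, ← haa]
          exact inv_mul_cancel₀ hapos.ne'
        · have h1 : ‖φm‖ ≤ b := pos_opNorm_le hφm_pos
          have hnn : ‖-φm‖ = ‖φm‖ := norm_neg φm
          rw [abs_of_pos hapos, hnn]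
          linarith
        · ext f
          simp only [ContinuousLinearMap.add_apply, ContinuousLinearMap.smul_apply,
            ContinuousLinearMap.neg_apply, ContinuousLinearMap.sub_apply, smul_eq_mul, hφm]
          field_simp
          ring
    -- transport the character
    have hμ := hR μ hμpos hμ1
    rw [hPset] at hμ
    set g : WeakDual ℝ C(K, ℝ) → WeakDual ℝ C(K, ℝ) :=
      fun ψ => StrongDual.toWeakDual (s • WeakDual.toStrongDual ψ + cst) with hg
    have hg_cont : Continuous g := by
      apply WeakDual.continuous_of_continuous_eval
      intro f
      have : (fun ψ : WeakDual ℝ C(K, ℝ) => (g ψ) f)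
          = fun ψ : WeakDual ℝ C(K, ℝ) => s * ψ f + cst f := rfl
      rw [this]
      exact ((continuous_const.mul (WeakDual.eval_continuous f)).add continuous_const)
    have hgμ : g (StrongDual.toWeakDual μ) = StrongDual.toWeakDual φ := by
      show StrongDual.toWeakDual (s • μ + cst) = StrongDual.toWeakDual φ
      rw [heq]
    have hg_inj : ∀ z, g z = g (StrongDual.toWeakDual μ) → z = StrongDual.toWeakDual μ := by
      intro z hz
      have h1 : s • WeakDual.toStrongDual z + cst = s • μ + cst :=
        (StrongDual.toWeakDual_inj _ _).1 hz
      have h2 : s • WeakDual.toStrongDual z = s • μ := by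
        have := congrArg (fun ξ => ξ - cst) h1
        simpa using this
      have h3 : WeakDual.toStrongDual z = μ := by
        ext f
        have h4 := congrArg (fun ξ : StrongDual ℝ C(K, ℝ) => ξ f) h2
        simp only [ContinuousLinearMap.smul_apply, smul_eq_mul] at h4
        exact mul_left_cancel₀ hs0 h4
      show z = StrongDual.toWeakDual μ
      exact congrArg StrongDual.toWeakDual h3
    have hgP : ∀ ψ ∈ Pset K, g ψ ∈ dualBall (C(K, ℝ)) := by
      intro ψ hψ
      show ‖WeakDual.toStrongDual (g ψ)‖ ≤ 1
      have h1 : WeakDual.toStrongDual (g ψ) = s • WeakDual.toStrongDual ψ + cst := rfl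
      rw [h1]
      have h2 : ‖WeakDual.toStrongDual ψ‖ ≤ 1 := by
        have h3 := pos_opNorm_le (ψ := WeakDual.toStrongDual ψ) hψ.1
        exact le_trans h3 (le_of_eq hψ.2)
      calc ‖s • WeakDual.toStrongDual ψ + cst‖
          ≤ ‖s • WeakDual.toStrongDual ψ‖ + ‖cst‖ := norm_add_le (s • WeakDual.toStrongDual ψ) cst
        _ ≤ |s| * ‖WeakDual.toStrongDual ψ‖ + ‖cst‖ := by
            rw [← Real.norm_eq_abs]; exact add_le_add_left (ContinuousLinearMap.opNorm_smul_le s _) _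
        _ ≤ |s| * 1 + ‖cst‖ := by
            have := mul_le_mul_of_nonneg_left h2 (abs_nonneg s)
            linarith
        _ ≤ 1 := by rw [mul_one]; exact habs
    exact le_trans hμ (relChar_le_embed g hg_cont hg_inj Pcompact hgP hgμ)
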